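/- Let X_1, …, X_T be i.i.d. samples from μ and set Y_T^max = max_{1≤i≤T} f(X_i). Then for every ε ∈ (0,1), with probability at least 1 − ε, the optimality gap satisfies f* − Y_T^max ≤ L·Θ·((1 − ε^{1/T})/κ_s)^{1/d_s}. -/

import Mathlib

open MeasureTheory ProbabilityTheory Real

/-- **Random search, high-probability optimality-gap bound (Theorem `thm:rs`).**
If `X 1, …, X T` are i.i.d. samples from `μ` and `Y = max_i f (X i)`, then for every
`ε ∈ (0,1)`, with probability at least `1 - ε`,
`f* - Y ≤ L Θ ((1 - ε^{1/T}) / κs)^{1/ds}`. -/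
theorem random_search_high_probability_bound
    {𝒳 : Type*} [MetricSpace 𝒳] [CompactSpace 𝒳] [MeasurableSpace 𝒳] [BorelSpace 𝒳]
    (μ : Measure 𝒳) [IsProbabilityMeasure μ]
    (f : 𝒳 → ℝ) (L : ℝ) (hL : 0 ≤ L) (hf : LipschitzWith L.toNNReal f)
    (fstar fmin Θ : ℝ)
    (hfstar : fstar = ⨆ x, f x) (hfmin : fmin = ⨅ x, f x)
    (hΘ : Θ = Metric.diam (Set.univ : Set 𝒳))
    (ds κs : ℝ) (hds : 0 < ds) (hκs : κs ∈ Set.Ioc (0 : ℝ) 1)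
    (hscatter : ∀ α ∈ Set.Ioc (0 : ℝ) 1,
      μ {x | f x < fstar - α * (fstar - fmin)} ≤ ENNReal.ofReal (1 - κs * α ^ ds))
    {Ω : Type*} [MeasurableSpace Ω] (P : Measure Ω) [IsProbabilityMeasure P]
    (T : ℕ) (hT : 0 < T)
    (X : Fin T → Ω → 𝒳) (hXmeas : ∀ i, Measurable (X i))
    (hiid : iIndepFun X P)
    (hlaw : ∀ i, Measure.map (X i) P = μ)
    (ε : ℝ) (hε : ε ∈ Set.Ioo (0 : ℝ) 1) :
    ENNReal.ofReal (1 - ε) ≤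
      P {ω | fstar - (⨆ i, f (X i ω))
        ≤ L * Θ * ((1 - ε ^ ((1 : ℝ) / T)) / κs) ^ ((1 : ℝ) / ds)} := by
  -- The space is nonempty.
  have hne : Nonempty 𝒳 := by
    by_contra h
    rw [not_nonempty_iff] at h
    have h1 : μ Set.univ = 1 := measure_univ
    rw [Set.univ_eq_empty_iff.mpr h, measure_empty] at h1
    exact zero_ne_one h1
  haveI := hne
  have hfc : Continuous f := hf.continuous
  have hbddA : BddAbove (Set.range f) := by
    have := (isCompact_range hfc).bddAbove
    exact this
  have hbddB : BddBelow (Set.range f) := (isCompact_range hfc).bddBelow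
  have hfle : ∀ x, f x ≤ fstar := by
    intro x; rw [hfstar]; exact le_ciSup hbddA x
  have hfge : ∀ x, fmin ≤ f x := by
    intro x; rw [hfmin]; exact ciInf_le hbddB x
  have hΔ0 : 0 ≤ fstar - fmin := by
    obtain ⟨x⟩ := hne
    linarith [hfle x, hfge x]
  -- Lipschitz bound: fstar - fmin ≤ L * Θ
  have hΔLΘ : fstar - fmin ≤ L * Θ := by
    have hdist : ∀ x y : 𝒳, f x - f y ≤ L * Θ := by
      intro x y
      have h1 := hf.dist_le_mul x y
      rw [Real.coe_toNNReal L hL] at h1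
      have h2 : dist x y ≤ Θ := by
        rw [hΘ]
        exact Metric.dist_le_diam_of_mem isCompact_univ.isBounded
          (Set.mem_univ x) (Set.mem_univ y)
      have h3 : f x - f y ≤ dist (f x) (f y) := by
        rw [Real.dist_eq]; exact le_abs_self _
      calc f x - f y ≤ L * dist x y := le_trans h3 h1
        _ ≤ L * Θ := by nlinarith [dist_nonneg (x := x) (y := y)]
    have h4 : ∀ y, fstar ≤ f y + L * Θ := by
      intro y
      rw [hfstar]
      exact ciSup_le fun x => by linarith [hdist x y]
    have h5 : fstar - L * Θ ≤ fmin := by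
      rw [hfmin]
      exact le_ciInf fun y => by linarith [h4 y]
    linarith
  set u : ℝ := 1 - ε ^ ((1 : ℝ) / T) with hu
  have hT' : (0 : ℝ) < (T : ℝ) := by exact_mod_cast hT
  have hεT : ε ^ ((1 : ℝ) / T) < 1 :=
    Real.rpow_lt_one hε.1.le hε.2 (by positivity)
  have hεT0 : 0 < ε ^ ((1 : ℝ) / T) := Real.rpow_pos_of_pos hε.1 _
  have hu0 : 0 < u := by simp only [hu]; linarith
  have hu1 : u < 1 := by simp only [hu]; linarith
  set γ : ℝ := (u / κs) ^ ((1 : ℝ) / ds) with hγ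
  have hγ0 : 0 < γ := Real.rpow_pos_of_pos (div_pos hu0 hκs.1) _
  set α : ℝ := min γ 1 with hα
  have hα0 : 0 < α := lt_min hγ0 one_pos
  have hα1 : α ≤ 1 := min_le_right _ _
  set c : ℝ := fstar - α * (fstar - fmin) with hc
  set A : Set 𝒳 := {x | f x < c} with hA
  have hAmeas : MeasurableSet A := measurableSet_lt hfc.measurable measurable_const
  -- Key measure bound
  have hμA : μ A ≤ ENNReal.ofReal (ε ^ ((1 : ℝ) / T)) := by
    rcases le_or_gt γ 1 with hγ1 | hγ1
    · have hαγ : α = γ := min_eq_left hγ1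
      have hbound := hscatter α ⟨hα0, hα1⟩
      have hpow : κs * α ^ ds = u := by
        rw [hαγ, hγ, ← Real.rpow_mul (div_pos hu0 hκs.1).le,
          one_div_mul_cancel hds.ne', Real.rpow_one]
        rw [mul_comm, div_mul_cancel₀ _ hκs.1.ne']
      rw [hpow] at hbound
      calc μ A ≤ ENNReal.ofReal (1 - u) := hbound
        _ = ENNReal.ofReal (ε ^ ((1 : ℝ) / T)) := by rw [hu]; ring_nf
    · have hαγ : α = 1 := min_eq_right hγ1.le
      have hempty : A = ∅ := by
        ext x
        simp only [hA, Set.mem_setOf_eq, Set.mem_empty_iff_false, iff_false, not_lt, hc, hαγ]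
        linarith [hfge x]
      rw [hempty, measure_empty]
      exact zero_le
  -- bad event
  set B : Set Ω := ⋂ i, X i ⁻¹' A with hB
  have hBmeas : MeasurableSet B := MeasurableSet.iInter fun i => (hXmeas i) hAmeas
  have hPB : P B = ∏ i : Fin T, μ A := by
    rw [hB, hiid.meas_iInter (fun i => ⟨A, hAmeas, rfl⟩)]
    exact Finset.prod_congr rfl fun i _ => by
      rw [← hlaw i, Measure.map_apply (hXmeas i) hAmeas]
  have hPBle : P B ≤ ENNReal.ofReal ε := by
    rw [hPB]
    calc ∏ _i : Fin T, μ A ≤ ∏ _i : Fin T, ENNReal.ofReal (ε ^ ((1 : ℝ) / T)) :=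
          Finset.prod_le_prod' fun i _ => hμA
      _ = ENNReal.ofReal (ε ^ ((1 : ℝ) / T)) ^ T := by
          rw [Finset.prod_const]; simp
      _ = ENNReal.ofReal ((ε ^ ((1 : ℝ) / T)) ^ T) := by
          rw [ENNReal.ofReal_pow hεT0.le]
      _ = ENNReal.ofReal ε := by
          congr 1
          rw [← Real.rpow_natCast (ε ^ ((1 : ℝ) / T)) T, ← Real.rpow_mul hε.1.le,
            one_div_mul_cancel (ne_of_gt hT'), Real.rpow_one]
  -- complement of bad event is contained in the good event
  have hsub : Bᶜ ⊆ {ω | fstar - (⨆ i, f (X i ω))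
      ≤ L * Θ * ((1 - ε ^ ((1 : ℝ) / T)) / κs) ^ ((1 : ℝ) / ds)} := by
    intro ω hω
    simp only [hB, Set.compl_iInter, Set.mem_iUnion, Set.mem_compl_iff, Set.mem_preimage,
      hA, Set.mem_setOf_eq, not_lt] at hω
    obtain ⟨i, hi⟩ := hω
    have hsup : f (X i ω) ≤ ⨆ j, f (X j ω) :=
      le_ciSup (f := fun j => f (X j ω)) (Set.Finite.bddAbove (Set.finite_range _)) i
    have h1 : fstar - (⨆ j, f (X j ω)) ≤ α * (fstar - fmin) := by
      simp only [hc] at hi; linarith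
    have h2 : α * (fstar - fmin) ≤ γ * (L * Θ) :=
      mul_le_mul (min_le_left _ _) hΔLΘ hΔ0 hγ0.le
    simp only [Set.mem_setOf_eq]
    calc fstar - (⨆ j, f (X j ω)) ≤ γ * (L * Θ) := le_trans h1 h2
      _ = L * Θ * ((1 - ε ^ ((1 : ℝ) / T)) / κs) ^ ((1 : ℝ) / ds) := by
          rw [hγ, hu]; ring
  calc ENNReal.ofReal (1 - ε) = 1 - ENNReal.ofReal ε := by
        rw [ENNReal.ofReal_sub _ hε.1.le, ENNReal.ofReal_one]
    _ ≤ 1 - P B := tsub_le_tsub_left hPBle 1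
    _ = P Bᶜ := by
        rw [measure_compl hBmeas (measure_ne_top P B), measure_univ]
    _ ≤ _ := measure_mono hsub
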